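/- Suppose a unit vector φ ∈ C^d ⊗ C^d satisfies ⟨φ,(A(j)⊗id)φ⟩ = λδ(j) + (1−λ)/d and ⟨φ,(B(k)⊗id)φ⟩ = γδ(k) + (1−γ)/d for all j,k ∈ Z_d, where δ is the point mass at 0. Then γ ≤ (1/d)[(d−2)(1−λ) + 2√((1−d)λ² + (d−2)λ + 1)]. -/

import Mathlib

open Matrix Kronecker Finset
open scoped ComplexOrder

/-- ω = e^{2πi/d} -/
noncomputable def ww (d : ℕ) : ℂ := Complex.exp (2 * Real.pi * Complex.I / d)

/-- shift unitary U_x φ_k = φ_{k+x} -/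
noncomputable def Um (d : ℕ) (x : ZMod d) : Matrix (ZMod d) (ZMod d) ℂ :=
  fun i j => if i = j + x then 1 else 0

/-- modulation unitary V_y φ_k = ω^{yk} φ_k -/
noncomputable def Vm (d : ℕ) (y : ZMod d) : Matrix (ZMod d) (ZMod d) ℂ :=
  Matrix.diagonal fun i => ww d ^ (y * i).val

/-- finite Fourier transform F φ_k = (1/√d) Σ_h ω^{-hk} φ_h -/
noncomputable def Fm (d : ℕ) : Matrix (ZMod d) (ZMod d) ℂ :=
  fun i j => (1 / Real.sqrt d : ℂ) * (ww d)⁻¹ ^ (i * j).val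

/-- the standard orthonormal basis vector φ_k -/
noncomputable def phiV (d : ℕ) (k : ZMod d) : ZMod d → ℂ := Pi.single k 1

/-- ψ_k = F* φ_k -/
noncomputable def psiV (d : ℕ) [NeZero d] (k : ZMod d) : ZMod d → ℂ :=
  (Fm d)ᴴ.mulVec (phiV d k)

/-- A(j) = |φ_j⟩⟨φ_j| -/
noncomputable def Aob (d : ℕ) (j : ZMod d) : Matrix (ZMod d) (ZMod d) ℂ :=
  vecMulVec (phiV d j) (star (phiV d j))

/-- B(k) = |ψ_k⟩⟨ψ_k| -/
noncomputable def Bob (d : ℕ) [NeZero d] (k : ZMod d) : Matrix (ZMod d) (ZMod d) ℂ :=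
  vecMulVec (psiV d k) (star (psiV d k))

lemma ww_pow_d (d : ℕ) [NeZero d] : ww d ^ d = 1 :=
  (Complex.isPrimitiveRoot_exp d (NeZero.ne d)).pow_eq_one

lemma ww_prim (d : ℕ) [NeZero d] : IsPrimitiveRoot (ww d) d :=
  Complex.isPrimitiveRoot_exp d (NeZero.ne d)

noncomputable def chi (d : ℕ) (z : ZMod d) : ℂ := ww d ^ z.val

lemma chi_add (d : ℕ) [NeZero d] (z w : ZMod d) : chi d (z + w) = chi d z * chi d w := by
  unfold chi
  rw [ZMod.val_add, ← pow_add]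
  conv_rhs => rw [← Nat.mod_add_div (z.val + w.val) d]
  rw [pow_add, pow_mul, ww_pow_d, one_pow, mul_one]

lemma chi_zero (d : ℕ) : chi d 0 = 1 := by simp [chi]

lemma chi_mul_val (d : ℕ) [NeZero d] (k m : ZMod d) :
    chi d (k * m) = (ww d ^ m.val) ^ k.val := by
  unfold chi
  rw [ZMod.val_mul, ← pow_mul, mul_comm m.val]
  conv_rhs => rw [← Nat.mod_add_div (k.val * m.val) d]
  rw [pow_add, pow_mul, ww_pow_d, one_pow, mul_one]

lemma chi_sum (d : ℕ) [NeZero d] (m : ZMod d) :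
    ∑ k : ZMod d, chi d (k * m) = if m = 0 then (d : ℂ) else 0 := by
  have h1 : ∑ k : ZMod d, chi d (k * m) = ∑ i ∈ Finset.range d, (ww d ^ m.val) ^ i := by
    refine Finset.sum_nbij' (fun k => k.val) (fun i => (i : ZMod d)) ?_ ?_ ?_ ?_ ?_
    · intro a _; exact Finset.mem_range.mpr (ZMod.val_lt a)
    · intro a _; exact Finset.mem_univ _
    · intro a _; exact ZMod.natCast_zmod_val a
    · intro a ha; exact ZMod.val_cast_of_lt (Finset.mem_range.mp ha)
    · intro a _; exact chi_mul_val d a m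
  rw [h1]
  by_cases hm : m = 0
  · simp [hm, ZMod.val_zero]
  · have hv : m.val ≠ 0 := fun h => hm (by rwa [← ZMod.val_eq_zero])
    have hne : ww d ^ m.val ≠ 1 := by
      intro h
      have hdvd := ((ww_prim d).pow_eq_one_iff_dvd m.val).mp h
      have := Nat.le_of_dvd (Nat.pos_of_ne_zero hv) hdvd
      exact absurd (ZMod.val_lt m) (by omega)
    rw [if_neg hm, geom_sum_eq hne]
    have hco : (ww d ^ m.val) ^ d = 1 := by
      rw [← pow_mul, mul_comm, pow_mul, ww_pow_d, one_pow]
    rw [hco, sub_self, zero_div]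

lemma ww_ne_zero (d : ℕ) : ww d ≠ 0 := Complex.exp_ne_zero _

lemma chi_ne_zero (d : ℕ) (z : ZMod d) : chi d z ≠ 0 := pow_ne_zero _ (ww_ne_zero d)

lemma chi_neg (d : ℕ) [NeZero d] (z : ZMod d) : chi d (-z) = (chi d z)⁻¹ := by
  have h : chi d z * chi d (-z) = 1 := by
    rw [← chi_add, add_neg_cancel, chi_zero]
  field_simp [chi_ne_zero] at h ⊢
  linear_combination h

lemma ww_star (d : ℕ) : (starRingEnd ℂ) (ww d) = (ww d)⁻¹ := by
  unfold ww
  rw [← Complex.exp_conj, ← Complex.exp_neg]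
  congr 1
  simp [map_div₀, Complex.conj_I, Complex.conj_ofReal, map_ofNat]
  ring

lemma chi_star (d : ℕ) [NeZero d] (z : ZMod d) : (starRingEnd ℂ) (chi d z) = chi d (-z) := by
  rw [chi_neg]
  unfold chi
  rw [map_pow, ww_star, inv_pow]






lemma key1 (d : ℕ) [NeZero d] (φ : ZMod d × ZMod d → ℂ) (M : Matrix (ZMod d) (ZMod d) ℂ) :
    star φ ⬝ᵥ ((M ⊗ₖ (1 : Matrix (ZMod d) (ZMod d) ℂ)).mulVec φ) =
    ∑ a : ZMod d, ∑ b : ZMod d, M a b * (∑ s : ZMod d, (starRingEnd ℂ) (φ (a, s)) * φ (b, s)) := by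
  simp only [dotProduct, mulVec, Matrix.kroneckerMap_apply, Matrix.one_apply, Pi.star_apply,
    RCLike.star_def]
  rw [Fintype.sum_prod_type]
  refine Finset.sum_congr rfl fun a _ => ?_
  have hin : ∀ s : ZMod d,
      (∑ x : ZMod d × ZMod d, (M a x.1 * if s = x.2 then 1 else 0) * φ x)
        = ∑ b : ZMod d, M a b * φ (b, s) := by
    intro s
    rw [Fintype.sum_prod_type]
    refine Finset.sum_congr rfl fun b _ => ?_
    simp [mul_ite, ite_mul, eq_comm]
  simp only [hin, Finset.mul_sum]
  rw [Finset.sum_comm]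
  exact Finset.sum_congr rfl fun b _ => Finset.sum_congr rfl fun s _ => by ring

lemma Aob_apply (d : ℕ) (j a b : ZMod d) :
    Aob d j a b = (if a = j then 1 else 0) * (if b = j then 1 else 0) := by
  simp [Aob, vecMulVec_apply, phiV, Pi.single_apply]

lemma conj_invsqrt (d : ℕ) : (starRingEnd ℂ) (1 / (Real.sqrt d : ℂ)) = 1 / (Real.sqrt d : ℂ) := by
  rw [map_div₀, _root_.map_one, Complex.conj_ofReal]

lemma psiV_apply (d : ℕ) [NeZero d] (k a : ZMod d) :
    psiV d k a = (1 / (Real.sqrt d : ℂ)) * chi d (k * a) := by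
  have h0 : psiV d k a = (starRingEnd ℂ) (Fm d k a) := by
    simp only [psiV, mulVec, dotProduct, conjTranspose_apply, phiV, Pi.single_apply]
    rw [Finset.sum_eq_single k]
    · simp
    · intro b _ hb; simp [if_neg hb]
    · intro h; exact absurd (Finset.mem_univ k) h
  rw [h0]
  unfold Fm chi
  rw [_root_.map_mul, map_pow, map_inv₀, ww_star, inv_inv, conj_invsqrt]

lemma Bob_apply (d : ℕ) [NeZero d] (k a b : ZMod d) :
    Bob d k a b = (1 / (d : ℂ)) * chi d (k * (a - b)) := by
  simp only [Bob, vecMulVec_apply, Pi.star_apply, psiV_apply, RCLike.star_def, _root_.map_mul]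
  rw [chi_star, conj_invsqrt]
  have h2 : (1 / (Real.sqrt d : ℂ)) * (1 / (Real.sqrt d : ℂ)) = 1 / d := by
    rw [div_mul_div_comm, one_mul, ← Complex.ofReal_mul,
      Real.mul_self_sqrt (Nat.cast_nonneg d), Complex.ofReal_natCast]
  have h3 : chi d (k * a) * chi d (-(k * b)) = chi d (k * (a - b)) := by
    rw [← chi_add]; congr 1; ring
  calc (1 / (Real.sqrt d : ℂ)) * chi d (k * a) * ((1 / (Real.sqrt d : ℂ)) * chi d (-(k * b)))
      = ((1 / (Real.sqrt d : ℂ)) * (1 / (Real.sqrt d : ℂ))) * (chi d (k * a) * chi d (-(k * b))) := by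
        ring
    _ = (1 / (d : ℂ)) * chi d (k * (a - b)) := by rw [h2, h3]

theorem unsharpness_tradeoff_bound (d : ℕ) (hd : 2 ≤ d) [NeZero d]
    (l g : ℝ) (hl : 0 ≤ l) (hl1 : l ≤ 1) (hg : 0 ≤ g) (hg1 : g ≤ 1)
    (φ : ZMod d × ZMod d → ℂ) (hunit : star φ ⬝ᵥ φ = 1)
    (hA : ∀ j : ZMod d,
      star φ ⬝ᵥ ((Aob d j ⊗ₖ (1 : Matrix (ZMod d) (ZMod d) ℂ)).mulVec φ) =
        ((l * (if j = 0 then 1 else 0) + (1 - l) / d : ℝ) : ℂ))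
    (hB : ∀ k : ZMod d,
      star φ ⬝ᵥ ((Bob d k ⊗ₖ (1 : Matrix (ZMod d) (ZMod d) ℂ)).mulVec φ) =
        ((g * (if k = 0 then 1 else 0) + (1 - g) / d : ℝ) : ℂ)) :
    g ≤ (1 / d) * ((d - 2) * (1 - l) +
      2 * Real.sqrt ((1 - d) * l ^ 2 + (d - 2) * l + 1)) := by
  haveI : Fact (1 < d) := ⟨by omega⟩
  have hd0 : (d : ℝ) ≠ 0 := Nat.cast_ne_zero.mpr (NeZero.ne d)
  have hdC : (d : ℂ) ≠ 0 := Nat.cast_ne_zero.mpr (NeZero.ne d)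
  set r : ZMod d → ZMod d → ℂ :=
    fun a b => ∑ s : ZMod d, (starRingEnd ℂ) (φ (a, s)) * φ (b, s) with hr
  set p : ZMod d → ℝ := fun a => l * (if a = 0 then 1 else 0) + (1 - l) / d with hp
  -- diagonal values
  have hdiag : ∀ j : ZMod d, r j j = ((p j : ℝ) : ℂ) := by
    intro j
    have h := hA j
    rw [key1] at h
    simp only [Aob_apply] at h
    rw [Finset.sum_eq_single j] at h
    · rw [Finset.sum_eq_single j] at h
      · simp only [eq_self_iff_true, if_true, one_mul] at h
        exact h
      · intro b _ hb; simp [if_neg hb]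
      · intro hj; exact absurd (Finset.mem_univ j) hj
    · intro a _ ha
      rw [Finset.sum_eq_single j]
      · simp [if_neg ha]
      · intro b _ hb; simp [if_neg hb]
      · intro hj; exact absurd (Finset.mem_univ j) hj
    · intro hj; exact absurd (Finset.mem_univ j) hj
  -- B statistics
  have hB' : ∀ k : ZMod d, ∑ a : ZMod d, ∑ b : ZMod d, chi d (k * (a - b)) * r a b =
      (d : ℂ) * ((g * (if k = 0 then 1 else 0) + (1 - g) / d : ℝ) : ℂ) := by
    intro k
    have h := hB k
    rw [key1] at h
    simp only [Bob_apply] at h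
    have h2 : (1 / (d : ℂ)) * ∑ a : ZMod d, ∑ b : ZMod d, chi d (k * (a - b)) * r a b =
        ((g * (if k = 0 then 1 else 0) + (1 - g) / d : ℝ) : ℂ) := by
      rw [Finset.mul_sum]
      rw [← h]
      refine Finset.sum_congr rfl fun a _ => ?_
      rw [Finset.mul_sum]
      refine Finset.sum_congr rfl fun b _ => ?_
      ring
    rw [← h2]
    field_simp
  -- Fourier extraction: (g : ℂ) = ∑ b, r (b+1) b
  have hsum_neg : ∑ k : ZMod d, chi d (-k) = 0 := by
    have h1 : ∀ k : ZMod d, chi d (-k) = chi d (k * (-1)) := by intro k; congr 1; ring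
    simp only [h1]
    rw [chi_sum]
    have : (-1 : ZMod d) ≠ 0 := by
      intro h
      exact one_ne_zero (α := ZMod d) (by rwa [neg_eq_zero] at h)
    rw [if_neg this]
  have hgr : ((g : ℝ) : ℂ) = ∑ b : ZMod d, r (b + 1) b := by
    have E2 : ∑ k : ZMod d, chi d (-k) *
        ((d : ℂ) * ((g * (if k = 0 then 1 else 0) + (1 - g) / d : ℝ) : ℂ)) = (d : ℂ) * g := by
      have hterm : ∀ k : ZMod d, chi d (-k) *
          ((d : ℂ) * ((g * (if k = 0 then 1 else 0) + (1 - g) / d : ℝ) : ℂ)) =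
          (d : ℂ) * g * (chi d (-k) * (if k = 0 then 1 else 0)) +
            ((1 - g : ℝ) : ℂ) * chi d (-k) := by
        intro k
        by_cases hk : k = 0
        · subst hk; simp only [if_pos rfl, chi_zero]; push_cast; field_simp
        · simp only [if_neg hk]; push_cast; field_simp
      simp only [hterm]
      rw [Finset.sum_add_distrib, ← Finset.mul_sum, ← Finset.mul_sum, hsum_neg, mul_zero, add_zero]
      rw [Finset.sum_eq_single (0 : ZMod d)]
      · simp [chi_zero]
      · intro k _ hk; simp [if_neg hk]
      · intro hk; exact absurd (Finset.mem_univ _) hk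
    have E1 : ∑ k : ZMod d, chi d (-k) *
        (∑ a : ZMod d, ∑ b : ZMod d, chi d (k * (a - b)) * r a b) =
        (d : ℂ) * ∑ b : ZMod d, r (b + 1) b := by
      have hterm : ∀ k : ZMod d, chi d (-k) *
          (∑ a : ZMod d, ∑ b : ZMod d, chi d (k * (a - b)) * r a b) =
          ∑ a : ZMod d, ∑ b : ZMod d, chi d (k * (a - b - 1)) * r a b := by
        intro k
        rw [Finset.mul_sum]
        refine Finset.sum_congr rfl fun a _ => ?_
        rw [Finset.mul_sum]
        refine Finset.sum_congr rfl fun b _ => ?_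
        have : chi d (k * (a - b - 1)) = chi d (-k) * chi d (k * (a - b)) := by
          rw [← chi_add]; congr 1; ring
        rw [this]; ring
      simp only [hterm]
      rw [Finset.sum_comm]
      have ha : ∀ a : ZMod d, ∑ k : ZMod d, ∑ b : ZMod d, chi d (k * (a - b - 1)) * r a b =
          ∑ b : ZMod d, (∑ k : ZMod d, chi d (k * (a - b - 1))) * r a b := by
        intro a
        rw [Finset.sum_comm]
        refine Finset.sum_congr rfl fun b _ => ?_
        rw [Finset.sum_mul]
      simp only [ha, chi_sum]
      rw [Finset.sum_comm, Finset.mul_sum]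
      refine Finset.sum_congr rfl fun b _ => ?_
      rw [Finset.sum_eq_single (b + 1)]
      · have h1 : b + 1 - b - 1 = (0 : ZMod d) := by ring
        rw [h1, if_pos rfl]
      · intro a _ hab
        have : ¬(a - b - 1 = 0) := by
          intro h; exact hab (by linear_combination (norm := ring_nf) h)
        rw [if_neg this, zero_mul]
      · intro hb; exact absurd (Finset.mem_univ _) hb
    have step : ∑ k : ZMod d, chi d (-k) *
        (∑ a : ZMod d, ∑ b : ZMod d, chi d (k * (a - b)) * r a b) = (d : ℂ) * g := by
      calc ∑ k : ZMod d, chi d (-k) *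
            (∑ a : ZMod d, ∑ b : ZMod d, chi d (k * (a - b)) * r a b)
          = ∑ k : ZMod d, chi d (-k) *
            ((d : ℂ) * ((g * (if k = 0 then 1 else 0) + (1 - g) / d : ℝ) : ℂ)) :=
            Finset.sum_congr rfl fun k _ => by rw [hB' k]
        _ = (d : ℂ) * g := E2
    exact (mul_left_cancel₀ hdC (E1.symm.trans step)).symm
  -- Cauchy–Schwarz part
  let v : ZMod d → EuclideanSpace ℂ (ZMod d) := fun a => WithLp.toLp 2 (fun s => φ (a, s))
  have hrv : ∀ a b : ZMod d, r a b = inner ℂ (v a) (v b) := by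
    intro a b
    rw [hr]
    simp [v, PiLp.inner_apply, RCLike.inner_apply]
    exact Finset.sum_congr rfl fun _ _ => mul_comm _ _
  have hudnn : (0:ℝ) ≤ (1 - l) / d := div_nonneg (by linarith) (Nat.cast_nonneg d)
  have hpnn : ∀ a : ZMod d, 0 ≤ p a := by
    intro a
    rw [hp]
    by_cases h : a = 0 <;> simp [h] <;> linarith
  have hnorm : ∀ a : ZMod d, ‖v a‖ = Real.sqrt (p a) := by
    intro a
    have h2 : ‖v a‖ ^ 2 = p a := by
      rw [InnerProductSpace.norm_sq_eq_re_inner (𝕜 := ℂ), ← hrv a a, hdiag a]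
      simp
    rw [← h2, Real.sqrt_sq (norm_nonneg _)]
  have hbound : g ≤ ∑ b : ZMod d, ‖v (b + 1)‖ * ‖v b‖ := by
    calc g ≤ |g| := le_abs_self g
      _ = ‖((g : ℝ) : ℂ)‖ := by rw [Complex.norm_real, Real.norm_eq_abs]
      _ = ‖∑ b : ZMod d, r (b + 1) b‖ := by rw [hgr]
      _ ≤ ∑ b : ZMod d, ‖r (b + 1) b‖ := norm_sum_le _ _
      _ ≤ ∑ b : ZMod d, ‖v (b + 1)‖ * ‖v b‖ :=
        Finset.sum_le_sum fun b _ => by rw [hrv]; exact norm_inner_le_norm _ _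
  -- special values
  have hneg1 : (-1 : ZMod d) ≠ 0 := by
    intro h
    exact one_ne_zero (α := ZMod d) (by rwa [neg_eq_zero] at h)
  have hone : (1 : ZMod d) ≠ 0 := one_ne_zero
  have hp0 : p 0 = l + (1 - l) / d := by rw [hp]; simp
  have hpb : ∀ a : ZMod d, a ≠ 0 → p a = (1 - l) / d := by
    intro a h; rw [hp]; simp [h]
  -- split the sum
  have hmem1 : (-1 : ZMod d) ∈ (Finset.univ.erase (0 : ZMod d)) :=
    Finset.mem_erase.mpr ⟨hneg1, Finset.mem_univ _⟩
  have hsplit : ∑ b : ZMod d, ‖v (b + 1)‖ * ‖v b‖ =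
      (∑ b ∈ (Finset.univ.erase (0 : ZMod d)).erase (-1 : ZMod d), ‖v (b + 1)‖ * ‖v b‖
        + ‖v (-1 + 1)‖ * ‖v (-1 : ZMod d)‖) + ‖v (0 + 1)‖ * ‖v (0 : ZMod d)‖ := by
    rw [Finset.sum_erase_add _ _ hmem1, Finset.sum_erase_add _ _ (Finset.mem_univ (0 : ZMod d))]
  have hvterm : ∀ b ∈ (Finset.univ.erase (0 : ZMod d)).erase (-1 : ZMod d),
      ‖v (b + 1)‖ * ‖v b‖ = (1 - l) / d := by
    intro b hbmem
    have hb1 : b ≠ -1 := (Finset.mem_erase.mp hbmem).1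
    have hb0 : b ≠ 0 := (Finset.mem_erase.mp (Finset.mem_erase.mp hbmem).2).1
    have hb1' : b + 1 ≠ 0 := fun h => hb1 (by linear_combination (norm := ring_nf) h)
    rw [hnorm, hnorm, hpb _ hb1', hpb _ hb0, Real.mul_self_sqrt hudnn]
  have hcard : ((Finset.univ.erase (0 : ZMod d)).erase (-1 : ZMod d)).card = d - 2 := by
    rw [Finset.card_erase_of_mem hmem1, Finset.card_erase_of_mem (Finset.mem_univ _),
      Finset.card_univ, ZMod.card]
    omega
  have hsum2 : ∑ b ∈ (Finset.univ.erase (0 : ZMod d)).erase (-1 : ZMod d),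
      ‖v (b + 1)‖ * ‖v b‖ = ((d : ℝ) - 2) * ((1 - l) / d) := by
    rw [Finset.sum_congr rfl hvterm, Finset.sum_const, hcard, nsmul_eq_mul]
    congr 1
    rw [Nat.cast_sub hd]
    norm_num
  have hterm0 : ‖v (0 + 1)‖ * ‖v (0 : ZMod d)‖ =
      Real.sqrt ((1 - l) / d) * Real.sqrt (l + (1 - l) / d) := by
    rw [zero_add, hnorm, hnorm, hp0, hpb _ hone]
  have htermn : ‖v (-1 + 1)‖ * ‖v (-1 : ZMod d)‖ =
      Real.sqrt (l + (1 - l) / d) * Real.sqrt ((1 - l) / d) := by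
    rw [neg_add_cancel, hnorm, hnorm, hp0, hpb _ hneg1]
  -- final algebra
  have hP0nn : (0:ℝ) ≤ l + (1 - l) / d := by linarith
  have hEeq : (1 - (d:ℝ)) * l ^ 2 + ((d:ℝ) - 2) * l + 1 =
      (d:ℝ) ^ 2 * ((l + (1 - l) / d) * ((1 - l) / d)) := by
    field_simp
    ring
  have hsq : Real.sqrt ((1 - (d:ℝ)) * l ^ 2 + ((d:ℝ) - 2) * l + 1) =
      (d:ℝ) * (Real.sqrt (l + (1 - l) / d) * Real.sqrt ((1 - l) / d)) := by
    rw [hEeq, Real.sqrt_mul (sq_nonneg _), Real.sqrt_sq (Nat.cast_nonneg d),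
      Real.sqrt_mul hP0nn]
  rw [hsq]
  have hfinal : (1 / (d:ℝ)) * (((d:ℝ) - 2) * (1 - l) +
      2 * ((d:ℝ) * (Real.sqrt (l + (1 - l) / d) * Real.sqrt ((1 - l) / d)))) =
      ((d:ℝ) - 2) * ((1 - l) / d) +
        Real.sqrt (l + (1 - l) / d) * Real.sqrt ((1 - l) / d) +
        Real.sqrt ((1 - l) / d) * Real.sqrt (l + (1 - l) / d) := by
    field_simp
    ring
  rw [hfinal]
  calc g ≤ ∑ b : ZMod d, ‖v (b + 1)‖ * ‖v b‖ := hbound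
    _ = ((d:ℝ) - 2) * ((1 - l) / d) +
        Real.sqrt (l + (1 - l) / d) * Real.sqrt ((1 - l) / d) +
        Real.sqrt ((1 - l) / d) * Real.sqrt (l + (1 - l) / d) := by
      rw [hsplit, hsum2, hterm0, htermn]
      try ring
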